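/- Let d, N ≥ 1, let x : Fin N → EuclideanSpace ℝ (Fin d) be terminal points and f : Fin N → EuclideanSpace ℝ (Fin d) a loading. Then the following are equivalent: (a) for every u : Fin N → EuclideanSpace ℝ (Fin d) satisfying ⟪u i − u j, x i − x j⟫ ≥ 0 for all i, j, one has ∑ i, ⟪f i, u i⟫ ≥ 0; (b) there exist tension coefficients λ : Fin N → Fin N → ℝ with λ i j = λ j i and λ i j ≥ 0 for all i, j, such that for every i, f i + ∑ j, (λ i j) • (x j − x i) = 0. (Existence of a web under tension supporting the loading, realized by the web connecting the terminal points pairwise.) -/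

import Mathlib

open scoped InnerProductSpace BigOperators

section Farkas

variable {H : Type*} [NormedAddCommGroup H] [InnerProductSpace ℝ H] [FiniteDimensional ℝ H]
variable {ι : Type*} [Fintype ι] [DecidableEq ι]

/-- The set of nonnegative combinations of `v p` for `p ∈ t`. -/
def coneOn (v : ι → H) (t : Finset ι) : Set H :=
  {y | ∃ μ : ι → ℝ, (∀ p, 0 ≤ μ p) ∧ y = ∑ p ∈ t, μ p • v p}

lemma coneOn_reduce (v : ι → H) (t : Finset ι)
    (hdep : ¬ LinearIndependent ℝ (fun p : {p // p ∈ t} => v p)) {y : H}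
    (hy : y ∈ coneOn v t) : ∃ q ∈ t, y ∈ coneOn v (t.erase q) := by
  classical
  obtain ⟨μ, hμ, rfl⟩ := hy
  obtain ⟨g, hg0, i0, hi0⟩ := Fintype.not_linearIndependent_iff.1 hdep
  -- extend `g` to `ι`
  set d0 : ι → ℝ := fun p => if h : p ∈ t then g ⟨p, h⟩ else 0 with hd0
  have hsum0 : ∑ p ∈ t, d0 p • v p = 0 := by
    rw [← Finset.sum_attach t (fun p => d0 p • v p)]
    rw [← hg0]
    refine Finset.sum_congr rfl fun p _ => ?_
    simp [hd0, p.2]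
  have hne0 : ∃ p ∈ t, d0 p ≠ 0 := ⟨i0, i0.2, by simpa [hd0, i0.2] using hi0⟩
  -- get a dependency with a positive coefficient
  obtain ⟨d, hdsum, p0, hp0t, hp0⟩ :
      ∃ d : ι → ℝ, ∑ p ∈ t, d p • v p = 0 ∧ ∃ p ∈ t, 0 < d p := by
    obtain ⟨p, hpt, hp⟩ := hne0
    rcases lt_or_gt_of_ne hp with h | h
    · refine ⟨fun q => -d0 q, ?_, p, hpt, neg_pos.2 h⟩
      show ∑ q ∈ t, -d0 q • v q = 0
      simp only [neg_smul, Finset.sum_neg_distrib, hsum0, neg_zero]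
    · exact ⟨d0, hsum0, p, hpt, h⟩
  -- pick the bottleneck index
  have hsne : (t.filter (fun p => 0 < d p)).Nonempty := ⟨p0, by simpa using ⟨hp0t, hp0⟩⟩
  obtain ⟨q, hq, hqmin⟩ := Finset.exists_min_image _ (fun p => μ p / d p) hsne
  have hqt : q ∈ t := (Finset.mem_filter.1 hq).1
  have hqd : 0 < d q := (Finset.mem_filter.1 hq).2
  set θ : ℝ := μ q / d q with hθdef
  have hθ : 0 ≤ θ := div_nonneg (hμ q) hqd.le
  set μ' : ι → ℝ := fun p => μ p - θ * d p with hμ'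
  have hμ'nonneg : ∀ p ∈ t, 0 ≤ μ' p := by
    intro p hpt
    by_cases hdp : 0 < d p
    · have := hqmin p (Finset.mem_filter.2 ⟨hpt, hdp⟩)
      have h2 : θ * d p ≤ μ p := by
        rw [← le_div_iff₀ hdp]; exact this
      simp only [hμ']; linarith
    · push_neg at hdp
      have : θ * d p ≤ 0 := mul_nonpos_of_nonneg_of_nonpos hθ hdp
      have := hμ p
      simp only [hμ']; linarith
  have hμ'q : μ' q = 0 := by
    simp only [hμ', hθdef]
    field_simp
    ring
  refine ⟨q, hqt, fun p => if p ∈ t.erase q then μ' p else 0, fun p => ?_, ?_⟩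
  · by_cases h : p ∈ t.erase q
    · simpa [h] using hμ'nonneg p (Finset.mem_of_mem_erase h)
    · simp [h]
  · have h1 : ∑ p ∈ t.erase q, (if p ∈ t.erase q then μ' p else 0) • v p
        = ∑ p ∈ t.erase q, μ' p • v p :=
      Finset.sum_congr rfl fun p hp => by simp [hp]
    have h2 : ∑ p ∈ t.erase q, μ' p • v p = ∑ p ∈ t, μ' p • v p := by
      rw [← Finset.add_sum_erase t _ hqt, hμ'q, zero_smul, zero_add]
    have h3 : ∑ p ∈ t, μ' p • v p = ∑ p ∈ t, μ p • v p := by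
      simp only [hμ', sub_smul, mul_smul, Finset.sum_sub_distrib]
      rw [← Finset.smul_sum, hdsum, smul_zero, sub_zero]
    rw [h1, h2, h3]

lemma coneOn_exists_indep (v : ι → H) (t : Finset ι) {y : H} (hy : y ∈ coneOn v t) :
    ∃ t' : Finset ι, LinearIndependent ℝ (fun p : {p // p ∈ t'} => v p) ∧ y ∈ coneOn v t' := by
  classical
  induction t using Finset.strongInduction generalizing y with
  | _ t ih =>
    by_cases h : LinearIndependent ℝ (fun p : {p // p ∈ t} => v p)
    · exact ⟨t, h, hy⟩
    · obtain ⟨q, hq, hy'⟩ := coneOn_reduce v t h hy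
      exact ih (t.erase q) (Finset.erase_ssubset hq) hy'

lemma coneOn_isClosed_of_indep (v : ι → H) (t : Finset ι)
    (hind : LinearIndependent ℝ (fun p : {p // p ∈ t} => v p)) :
    IsClosed (coneOn v t) := by
  classical
  let L : ({p // p ∈ t} → ℝ) →ₗ[ℝ] H :=
    { toFun := fun μ => ∑ p : {p // p ∈ t}, μ p • v ↑p
      map_add' := by
        intro a b
        simp [add_smul, Finset.sum_add_distrib]
      map_smul' := by
        intro c a
        simp [smul_smul, Finset.smul_sum] }
  have hker : LinearMap.ker L = ⊥ := by
    rw [LinearMap.ker_eq_bot']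
    intro m hm
    have := Fintype.linearIndependent_iff.1 hind m hm
    funext p; exact this p
  have hce := LinearMap.isClosedEmbedding_of_injective hker
  have horth : IsClosed {μ : {p // p ∈ t} → ℝ | ∀ p, 0 ≤ μ p} := by
    have : {μ : {p // p ∈ t} → ℝ | ∀ p, 0 ≤ μ p} = ⋂ p, {μ | 0 ≤ μ p} := by
      ext μ; simp [Set.mem_iInter]
    rw [this]
    exact isClosed_iInter fun p => isClosed_le continuous_const (continuous_apply p)
  have himg : coneOn v t = L '' {μ : {p // p ∈ t} → ℝ | ∀ p, 0 ≤ μ p} := by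
    ext y
    constructor
    · rintro ⟨μ, hμ, rfl⟩
      refine ⟨fun p => μ ↑p, fun p => hμ ↑p, ?_⟩
      show ∑ p : {p // p ∈ t}, μ ↑p • v ↑p = ∑ p ∈ t, μ p • v p
      rw [← Finset.sum_attach t (fun p => μ p • v p)]
      rfl
    · rintro ⟨μ, hμ, rfl⟩
      refine ⟨fun p => if h : p ∈ t then μ ⟨p, h⟩ else 0, fun p => ?_, ?_⟩
      · by_cases h : p ∈ t
        · simpa [h] using hμ ⟨p, h⟩
        · simp [h]
      · show ∑ p : {p // p ∈ t}, μ p • v ↑p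
            = ∑ p ∈ t, (if h : p ∈ t then μ ⟨p, h⟩ else 0) • v p
        rw [← Finset.sum_attach t (fun p => (if h : p ∈ t then μ ⟨p, h⟩ else 0) • v p)]
        exact (Finset.sum_congr rfl fun p _ => by simp [p.2]).symm
  rw [himg]
  exact hce.isClosedMap _ horth

lemma cone_isClosed (v : ι → H) : IsClosed (coneOn v Finset.univ) := by
  classical
  have key : coneOn v Finset.univ =
      ⋃ t ∈ {t : Finset ι | LinearIndependent ℝ (fun p : {p // p ∈ t} => v p)},
        coneOn v t := by
    apply Set.Subset.antisymm
    · intro y hy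
      obtain ⟨t', h1, h2⟩ := coneOn_exists_indep v Finset.univ hy
      exact Set.mem_biUnion h1 h2
    · intro y hy
      simp only [Set.mem_iUnion, Set.mem_setOf_eq] at hy
      obtain ⟨t, _, μ, hμ, rfl⟩ := hy
      refine ⟨fun p => if p ∈ t then μ p else 0, fun p => ?_, ?_⟩
      · by_cases h : p ∈ t <;> simp [h, hμ p]
      · show ∑ p ∈ t, μ p • v p = ∑ p : ι, (if p ∈ t then μ p else 0) • v p
        rw [← Finset.sum_subset (Finset.subset_univ t) (fun p _ hp => by simp [hp])]
        exact Finset.sum_congr rfl fun p hp => by simp [hp]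
  rw [key]
  exact (Set.toFinite _).isClosed_biUnion fun t ht => coneOn_isClosed_of_indep v t ht

/-- **Farkas' lemma** for a finite family of vectors in a finite-dimensional
real inner product space. -/
theorem farkas_cone (v : ι → H) (c : H)
    (h : ∀ u : H, (∀ p, 0 ≤ ⟪v p, u⟫_ℝ) → 0 ≤ ⟪c, u⟫_ℝ) :
    ∃ μ : ι → ℝ, (∀ p, 0 ≤ μ p) ∧ c = ∑ p, μ p • v p := by
  classical
  haveI : CompleteSpace H := FiniteDimensional.complete ℝ H
  by_contra hc
  let K : ConvexCone ℝ H :=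
    { carrier := coneOn v Finset.univ
      smul_mem' := by
        rintro a ha y ⟨μ, hμ, rfl⟩
        exact ⟨fun p => a * μ p, fun p => mul_nonneg ha.le (hμ p), by
          simp [Finset.smul_sum, mul_smul]⟩
      add_mem' := by
        rintro y ⟨μ, hμ, rfl⟩ z ⟨ν, hν, rfl⟩
        exact ⟨fun p => μ p + ν p, fun p => add_nonneg (hμ p) (hν p), by
          simp [add_smul, Finset.sum_add_distrib]⟩ }
  have hne : (K : Set H).Nonempty :=
    ⟨0, ⟨fun _ => 0, fun _ => le_refl 0, by simp⟩⟩
  have hcn : c ∉ K := fun ⟨μ, h1, h2⟩ => hc ⟨μ, h1, h2⟩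
  obtain ⟨u, hu1, hu2⟩ : ∃ u : H, (∀ y ∈ K, 0 ≤ ⟪y, u⟫_ℝ) ∧ ⟪u, c⟫_ℝ < 0 := by
    let P : ProperCone ℝ H :=
      { carrier := coneOn v Finset.univ
        add_mem' := fun ha hb => K.add_mem' ha hb
        zero_mem' := ⟨fun _ => 0, fun _ => le_refl 0, by simp⟩
        smul_mem' := by
          rintro a y ⟨μ, hμ, rfl⟩
          exact ⟨fun p => (a : ℝ) * μ p, fun p => mul_nonneg a.2 (hμ p), by
            simp [NNReal.smul_def, Finset.smul_sum, mul_smul]⟩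
        isClosed' := cone_isClosed v }
    obtain ⟨u, h1, h2⟩ := P.hyperplane_separation' (x₀ := c) (fun h => hcn h)
    exact ⟨u, h1, by rw [real_inner_comm]; exact h2⟩
  have hvu : ∀ p, 0 ≤ ⟪v p, u⟫_ℝ := by
    intro p
    refine hu1 (v p) ⟨fun q => if q = p then 1 else 0, fun q => by positivity, ?_⟩
    simp [ite_smul]
  have := h u hvu
  rw [real_inner_comm] at hu2
  linarith

end Farkas

section Web

variable {d N : ℕ}

local notation "E" => EuclideanSpace ℝ (Fin d)

/-- The generator associated to a pair of terminal points. -/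
noncomputable def barVec (x : Fin N → EuclideanSpace ℝ (Fin d)) (p : Fin N × Fin N) :
    PiLp 2 (fun _ : Fin N => EuclideanSpace ℝ (Fin d)) :=
  WithLp.toLp 2 fun k => (if k = p.1 then x p.1 - x p.2 else 0) + (if k = p.2 then x p.2 - x p.1 else 0)

lemma barVec_inner (x : Fin N → E) (p : Fin N × Fin N)
    (u : PiLp 2 (fun _ : Fin N => E)) :
    ⟪barVec x p, u⟫_ℝ = ⟪x p.1 - x p.2, u p.1 - u p.2⟫_ℝ := by
  classical
  obtain ⟨i, j⟩ := p
  rw [PiLp.inner_apply]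
  have hterm : ∀ k, ⟪barVec x (i, j) k, u k⟫_ℝ
      = (if k = i then ⟪x i - x j, u k⟫_ℝ else 0)
        + (if k = j then ⟪x j - x i, u k⟫_ℝ else 0) := by
    intro k
    simp only [barVec, PiLp.toLp_apply, inner_add_left]
    congr 1 <;> split <;> simp
  calc ∑ k, ⟪barVec x (i, j) k, u k⟫_ℝ
      = ∑ k, ((if k = i then ⟪x i - x j, u k⟫_ℝ else 0)
        + (if k = j then ⟪x j - x i, u k⟫_ℝ else 0)) :=
        Finset.sum_congr rfl fun k _ => hterm k
    _ = ⟪x i - x j, u i⟫_ℝ + ⟪x j - x i, u j⟫_ℝ := by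
        rw [Finset.sum_add_distrib]
        simp [Finset.sum_ite_eq']
    _ = ⟪x i - x j, u i - u j⟫_ℝ := by
        simp only [inner_sub_left, inner_sub_right]
        ring

lemma barVec_apply_sum (x : Fin N → E) (μ : Fin N × Fin N → ℝ) (k : Fin N) :
    (∑ p, μ p • barVec x p) k
      = ∑ j, (μ (k, j) + μ (j, k)) • (x k - x j) := by
  classical
  have happ : (∑ p, μ p • barVec x p) k = ∑ p, μ p • barVec x p k := by
    rw [WithLp.ofLp_sum, Finset.sum_apply]
    rfl
  rw [happ]
  have hterm : ∀ p : Fin N × Fin N, μ p • barVec x p k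
      = (if k = p.1 then μ p • (x p.1 - x p.2) else 0)
        + (if k = p.2 then μ p • (x p.2 - x p.1) else 0) := by
    intro p
    simp only [barVec, PiLp.toLp_apply, smul_add]
    congr 1 <;> split <;> simp
  calc ∑ p, μ p • barVec x p k
      = ∑ p : Fin N × Fin N, ((if k = p.1 then μ p • (x p.1 - x p.2) else 0)
        + (if k = p.2 then μ p • (x p.2 - x p.1) else 0)) :=
        Finset.sum_congr rfl fun p _ => hterm p
    _ = ∑ j, (μ (k, j) + μ (j, k)) • (x k - x j) := by
        rw [Finset.sum_add_distrib]
        have e1 : ∑ p : Fin N × Fin N, (if k = p.1 then μ p • (x p.1 - x p.2) else 0)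
            = ∑ j, μ (k, j) • (x k - x j) := by
          rw [Fintype.sum_prod_type]
          have h1 : ∀ i : Fin N, (∑ j, if k = i then μ (i, j) • (x i - x j) else 0)
              = if k = i then ∑ j, μ (i, j) • (x i - x j) else 0 := by
            intro i; split <;> simp
          rw [Finset.sum_congr rfl fun i _ => h1 i, Finset.sum_ite_eq]
          simp
        have e2 : ∑ p : Fin N × Fin N, (if k = p.2 then μ p • (x p.2 - x p.1) else 0)
            = ∑ j, μ (j, k) • (x k - x j) := by
          rw [Fintype.sum_prod_type_right]
          have h1 : ∀ j : Fin N, (∑ i, if k = j then μ (i, j) • (x j - x i) else 0)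
              = if k = j then ∑ i, μ (i, j) • (x j - x i) else 0 := by
            intro j; split <;> simp
          rw [Finset.sum_congr rfl fun j _ => h1 j, Finset.sum_ite_eq]
          simp
        rw [e1, e2, ← Finset.sum_add_distrib]
        exact Finset.sum_congr rfl fun j _ => (add_smul _ _ _).symm

/-- **Existence of a web under tension** (Theorem 1.1, discrete form).
The loading `f` at terminal points `x` does nonnegative work against every
admissible displacement iff there is a symmetric nonnegative family of tension
coefficients on the bars connecting the terminal points pairwise which
equilibrates the loading. -/
theorem web_under_tension_exists (d N : ℕ) (hd : 1 ≤ d) (hN : 1 ≤ N)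
    (x f : Fin N → EuclideanSpace ℝ (Fin d)) :
    (∀ u : Fin N → EuclideanSpace ℝ (Fin d),
        (∀ i j : Fin N, ⟪u i - u j, x i - x j⟫_ℝ ≥ 0) →
        ∑ i, ⟪f i, u i⟫_ℝ ≥ 0)
      ↔
    (∃ lam : Fin N → Fin N → ℝ,
        (∀ i j : Fin N, lam i j = lam j i) ∧
        (∀ i j : Fin N, lam i j ≥ 0) ∧
        (∀ i : Fin N, f i + ∑ j, lam i j • (x j - x i) = 0)) := by
  classical
  constructor
  · -- (a) → (b) via Farkas
    intro ha
    have hfarkas := farkas_cone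
      (H := PiLp 2 (fun _ : Fin N => EuclideanSpace ℝ (Fin d)))
      (ι := Fin N × Fin N) (barVec x) (WithLp.toLp 2 f) ?_
    · obtain ⟨μ, hμ, hfe⟩ := hfarkas
      refine ⟨fun i j => μ (i, j) + μ (j, i), fun i j => by ring,
        fun i j => add_nonneg (hμ (i, j)) (hμ (j, i)), fun i => ?_⟩
      have hk : f i = ∑ j, (μ (i, j) + μ (j, i)) • (x i - x j) := by
        have h2 := congrFun (congrArg WithLp.ofLp hfe) i
        rw [barVec_apply_sum] at h2
        exact h2
      rw [hk]
      rw [← Finset.sum_add_distrib]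
      apply Finset.sum_eq_zero
      intro j _
      rw [← smul_add]
      simp
    · intro u hu
      rw [PiLp.inner_apply]
      refine ha u fun i j => ?_
      have := hu (i, j)
      rw [barVec_inner] at this
      rw [real_inner_comm]
      exact this
  · -- (b) → (a)
    rintro ⟨lam, hsym, hpos, heq⟩ u hu
    have hf : ∀ i, f i = ∑ j, lam i j • (x i - x j) := by
      intro i
      have := heq i
      have h2 : f i = -∑ j, lam i j • (x j - x i) := eq_neg_of_add_eq_zero_left this
      rw [h2, ← Finset.sum_neg_distrib]
      refine Finset.sum_congr rfl fun j _ => ?_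
      rw [← smul_neg, neg_sub]
    have hS : ∑ i, ⟪f i, u i⟫_ℝ = ∑ i, ∑ j, lam i j * ⟪x i - x j, u i⟫_ℝ := by
      refine Finset.sum_congr rfl fun i _ => ?_
      rw [hf i, sum_inner]
      exact Finset.sum_congr rfl fun j _ => real_inner_smul_left _ _ _
    have hT : (0:ℝ) ≤ ∑ i, ∑ j, lam i j * ⟪x i - x j, u i - u j⟫_ℝ := by
      refine Finset.sum_nonneg fun i _ => Finset.sum_nonneg fun j _ => ?_
      refine mul_nonneg (hpos i j) ?_
      rw [real_inner_comm]
      exact hu i j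
    have hsplit : ∑ i, ∑ j, lam i j * ⟪x i - x j, u i - u j⟫_ℝ
        = (∑ i, ∑ j, lam i j * ⟪x i - x j, u i⟫_ℝ)
          + ∑ i, ∑ j, lam i j * ⟪x i - x j, u i⟫_ℝ := by
      have h1 : ∀ i j : Fin N, lam i j * ⟪x i - x j, u i - u j⟫_ℝ
          = lam i j * ⟪x i - x j, u i⟫_ℝ + lam i j * ⟪x j - x i, u j⟫_ℝ := by
        intro i j
        simp only [inner_sub_left, inner_sub_right]
        ring
      rw [Finset.sum_congr rfl fun i _ => Finset.sum_congr rfl fun j _ => h1 i j]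
      simp only [Finset.sum_add_distrib]
      congr 1
      rw [Finset.sum_comm]
      refine Finset.sum_congr rfl fun i _ => Finset.sum_congr rfl fun j _ => ?_
      rw [hsym i j]
    rw [hS]
    rw [hsplit] at hT
    linarith

end Web
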